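/- The edge-weighted plabic R-matrix satisfies the braid relation: T^{(1,2)} ∘ T^{(2,3)} ∘ T^{(1,2)} = T^{(2,3)} ∘ T^{(1,2)} ∘ T^{(2,3)} as transformations of the string weights (a,b,c) of a fully generic cylindric 3-loop expanded directed plabic network. -/

import Mathlib

noncomputable section

/-- `λ_i(x,y,z)` for a pair of adjacent strings of a cylindric expanded directed plabic
network, with white-to-black edge weights `x` (left string), `y` (right string) and crossing
edge weights `z`, all indexed by `ZMod n`:
`λ_i = Σ_{j=0}^{n-1} (∏_{k=1}^{j} x_{i+k}) · z_{i+j} · (∏_{k=j+1}^{n-1} y_{i+k})`. -/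
def lam (n : ℕ) (x y z : ZMod n → ℝ) (i : ZMod n) : ℝ :=
  ∑ j ∈ Finset.range n,
    (∏ k ∈ Finset.Icc 1 j, x (i + (k : ZMod n))) * z (i + (j : ZMod n)) *
      ∏ k ∈ Finset.Icc (j + 1) (n - 1), y (i + (k : ZMod n))

/-- First component of the (generic) plabic R-matrix: `x'_i = y_{i−1} λ_{i−1}/λ_i`. -/
def Rmat1 (n : ℕ) [NeZero n] (x y z : ZMod n → ℝ) : ZMod n → ℝ := fun i =>
  y (i - 1) * lam n x y z (i - 1) / lam n x y z i

/-- Second component of the (generic) plabic R-matrix: `y'_i = x_{i+1} λ_{i+1}/λ_i`. -/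
def Rmat2 (n : ℕ) [NeZero n] (x y z : ZMod n → ℝ) : ZMod n → ℝ := fun i =>
  x (i + 1) * lam n x y z (i + 1) / lam n x y z i

/-- The plabic R-matrix applied to strings 1 and 2 of a fully generic cylindric 3-loop
expanded directed plabic network with string weights `(a,b,c)`, crossing weights `z` between
strings 1,2 and `u` between strings 2,3 (crossing weights are unchanged in the generic
case). -/
def T12 (n : ℕ) [NeZero n] (z : ZMod n → ℝ)
    (p : (ZMod n → ℝ) × (ZMod n → ℝ) × (ZMod n → ℝ)) :
    (ZMod n → ℝ) × (ZMod n → ℝ) × (ZMod n → ℝ) :=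
  (Rmat1 n p.1 p.2.1 z, Rmat2 n p.1 p.2.1 z, p.2.2)

/-- The plabic R-matrix applied to strings 2 and 3. -/
def T23 (n : ℕ) [NeZero n] (u : ZMod n → ℝ)
    (p : (ZMod n → ℝ) × (ZMod n → ℝ) × (ZMod n → ℝ)) :
    (ZMod n → ℝ) × (ZMod n → ℝ) × (ZMod n → ℝ) :=
  (p.1, Rmat1 n p.2.1 p.2.2 u, Rmat2 n p.2.1 p.2.2 u)

namespace PBaux

def pb (n : ℕ) (x : ZMod n → ℝ) (i : ZMod n) (m : ℕ) : ℝ :=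
  ∏ k ∈ Finset.range m, x (i + (k : ZMod n))

variable {n : ℕ}

lemma pb_zero (x : ZMod n → ℝ) (i : ZMod n) : pb n x i 0 = 1 := by simp [pb]

lemma pb_succ_right (x : ZMod n → ℝ) (i : ZMod n) (m : ℕ) :
    pb n x i (m + 1) = pb n x i m * x (i + (m : ZMod n)) := by
  simp [pb, Finset.prod_range_succ]

lemma pb_succ_left (x : ZMod n → ℝ) (i : ZMod n) (m : ℕ) :
    pb n x i (m + 1) = x i * pb n x (i + 1) m := by
  rw [pb, Finset.prod_range_succ']
  rw [mul_comm]
  congr 1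
  · push_cast; simp
  · apply Finset.prod_congr rfl
    intro k _
    congr 1
    push_cast
    ring

lemma pb_full [NeZero n] (x : ZMod n → ℝ) (i : ZMod n) :
    pb n x i n = ∏ j : ZMod n, x j := by
  rw [pb]
  refine Finset.prod_bij' (fun k _ => i + (k : ZMod n)) (fun j _ => ((j - i).val))
    (fun k _ => Finset.mem_univ _) (fun j _ => Finset.mem_range.2 (ZMod.val_lt _))
    ?_ ?_ ?_
  · intro k hk
    simp only [Finset.mem_range] at hk
    simp [ZMod.val_cast_of_lt hk]
  · intro j _
    simp [ZMod.natCast_rightInverse (j - i)]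
  · intro k _; rfl

lemma pb_pos {x : ZMod n → ℝ} (hx : ∀ i, 0 < x i) (i : ZMod n) (m : ℕ) : 0 < pb n x i m :=
  Finset.prod_pos fun _ _ => hx _

lemma lam_pb [NeZero n] (x y z : ZMod n → ℝ) (i : ZMod n) :
    lam n x y z i = ∑ j ∈ Finset.range n,
      pb n x (i + 1) j * z (i + (j : ZMod n)) * pb n y (i + (j : ZMod n) + 1) (n - 1 - j) := by
  apply Finset.sum_congr rfl
  intro j hj
  congr 1
  · congr 1
    rw [← Finset.Ico_add_one_right_eq_Icc, Finset.prod_Ico_eq_prod_range, pb]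
    apply Finset.prod_congr rfl
    intro k _
    congr 1
    push_cast
    ring
  · rw [← Finset.Ico_add_one_right_eq_Icc, Finset.prod_Ico_eq_prod_range]
    have hn : n - 1 + 1 - (j + 1) = n - 1 - j := by omega
    rw [hn, pb]
    apply Finset.prod_congr rfl
    intro k _
    congr 1
    push_cast
    ring

lemma lam_pos [NeZero n] {x y z : ZMod n → ℝ} (hx : ∀ i, 0 < x i) (hy : ∀ i, 0 < y i)
    (hz : ∀ i, 0 < z i) (i : ZMod n) : 0 < lam n x y z i := by
  rw [lam_pb]
  apply Finset.sum_pos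
  · intro j _
    exact mul_pos (mul_pos (pb_pos hx _ _) (hz _)) (pb_pos hy _ _)
  · exact ⟨0, Finset.mem_range.2 (Nat.pos_of_ne_zero (NeZero.ne n))⟩

lemma lam_rec [NeZero n] (x y z : ZMod n → ℝ) (i : ZMod n) :
    y i * lam n x y z i - x (i + 1) * lam n x y z (i + 1)
      = z i * ((∏ j : ZMod n, y j) - ∏ j : ZMod n, x j) := by
  obtain ⟨m, rfl⟩ : ∃ m, n = m + 1 :=
    ⟨n - 1, by have := Nat.pos_of_ne_zero (NeZero.ne n); omega⟩
  rw [lam_pb, lam_pb, Finset.mul_sum, Finset.mul_sum, Finset.sum_range_succ',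
    Finset.sum_range_succ]
  have hterm : ∀ j ∈ Finset.range m,
      y i * (pb (m+1) x (i + 1) (j+1) * z (i + ((j+1 : ℕ) : ZMod (m+1)))
        * pb (m+1) y (i + ((j+1 : ℕ) : ZMod (m+1)) + 1) (m + 1 - 1 - (j+1)))
      = x (i + 1) * (pb (m+1) x (i + 1 + 1) j * z (i + 1 + (j : ZMod (m+1)))
        * pb (m+1) y (i + 1 + (j : ZMod (m+1)) + 1) (m + 1 - 1 - j)) := by
    intro j hj
    simp only [Finset.mem_range] at hj
    have e1 : (i + ((j+1 : ℕ) : ZMod (m+1))) = i + 1 + (j : ZMod (m+1)) := by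
      push_cast; ring
    have e2 : m + 1 - 1 - j = (m + 1 - 1 - (j+1)) + 1 := by omega
    have e3 : (i + 1 + (j : ZMod (m+1)) + 1 + ((m + 1 - 1 - (j+1) : ℕ) : ZMod (m+1))) = i := by
      have h2 : ((m : ZMod (m+1)) + 1) = 0 := by exact_mod_cast ZMod.natCast_self (m+1)
      push_cast [Nat.cast_sub (show j + 1 ≤ m by omega)]
      linear_combination h2
    rw [e1, e2, pb_succ_left x (i+1) j, pb_succ_right y (i + 1 + (j : ZMod (m+1)) + 1), e3]
    ring
  rw [Finset.sum_congr rfl hterm]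
  have h0 : y i * (pb (m+1) x (i + 1) 0 * z (i + ((0 : ℕ) : ZMod (m+1)))
      * pb (m+1) y (i + ((0 : ℕ) : ZMod (m+1)) + 1) (m + 1 - 1 - 0))
      = z i * ∏ j : ZMod (m+1), y j := by
    rw [← pb_full (n := m+1) y i]
    simp only [Nat.cast_zero, add_zero, Nat.sub_zero, Nat.add_sub_cancel, pb_zero]
    have : pb (m+1) y i (m+1) = y i * pb (m+1) y (i+1) m := pb_succ_left y i m
    rw [this]
    ring
  have hm : x (i + 1) * (pb (m+1) x (i + 1 + 1) m * z (i + 1 + (m : ZMod (m+1)))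
      * pb (m+1) y (i + 1 + (m : ZMod (m+1)) + 1) (m + 1 - 1 - m))
      = z i * ∏ j : ZMod (m+1), x j := by
    have h2 : ((m : ZMod (m+1)) + 1) = 0 := by exact_mod_cast ZMod.natCast_self (m+1)
    have e4 : (i + 1 + (m : ZMod (m+1))) = i := by linear_combination h2
    have e5 : m + 1 - 1 - m = 0 := by omega
    rw [e4, e5, pb_zero, ← pb_full (n := m+1) x (i+1), pb_succ_left x (i+1) m]
    ring
  rw [h0, hm]
  ring

lemma cyclic_zero [NeZero n] {x y f : ZMod n → ℝ}
    (h : ∀ i, y i * f i = x (i + 1) * f (i + 1))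
    (hne : (∏ j : ZMod n, x j) ≠ ∏ j : ZMod n, y j) : ∀ i, f i = 0 := by
  intro i
  have key : ∀ k : ℕ, f (i + (k : ZMod n)) * pb n x (i + 1) k = f i * pb n y i k := by
    intro k
    induction k with
    | zero => simp [pb_zero]
    | succ k ih =>
      have e1 : (i + ((k + 1 : ℕ) : ZMod n)) = i + (k : ZMod n) + 1 := by push_cast; ring
      have e2 : (i + 1 + (k : ZMod n)) = i + (k : ZMod n) + 1 := by ring
      rw [e1, pb_succ_right, pb_succ_right, e2]
      have h' := h (i + (k : ZMod n))
      linear_combination (y (i + (k : ZMod n))) * ih - (pb n x (i + 1) k) * h'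
  have hk := key n
  rw [ZMod.natCast_self, add_zero, pb_full, pb_full] at hk
  have h0 : f i * ((∏ j : ZMod n, x j) - ∏ j : ZMod n, y j) = 0 := by linear_combination hk
  rcases mul_eq_zero.1 h0 with h1 | h1
  · exact h1
  · exact absurd (sub_eq_zero.1 h1) hne

variable [NeZero n] {x y z : ZMod n → ℝ}

lemma Rmat1_pos (hx : ∀ i, 0 < x i) (hy : ∀ i, 0 < y i) (hz : ∀ i, 0 < z i) (i : ZMod n) :
    0 < Rmat1 n x y z i :=
  div_pos (mul_pos (hy _) (lam_pos hx hy hz _)) (lam_pos hx hy hz _)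

lemma Rmat2_pos (hx : ∀ i, 0 < x i) (hy : ∀ i, 0 < y i) (hz : ∀ i, 0 < z i) (i : ZMod n) :
    0 < Rmat2 n x y z i :=
  div_pos (mul_pos (hx _) (lam_pos hx hy hz _)) (lam_pos hx hy hz _)

lemma Rmat1_add (hx : ∀ i, 0 < x i) (hy : ∀ i, 0 < y i) (hz : ∀ i, 0 < z i) (i : ZMod n) :
    Rmat1 n x y z i = x i + z (i - 1) * ((∏ j : ZMod n, y j) - ∏ j : ZMod n, x j)
      / lam n x y z i := by
  have h := lam_rec x y z (i - 1)
  rw [sub_add_cancel] at h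
  have hL : lam n x y z i ≠ 0 := (lam_pos hx hy hz i).ne'
  rw [Rmat1]
  field_simp
  linear_combination h

lemma Rmat2_add (hx : ∀ i, 0 < x i) (hy : ∀ i, 0 < y i) (hz : ∀ i, 0 < z i) (i : ZMod n) :
    Rmat2 n x y z i = y i - z i * ((∏ j : ZMod n, y j) - ∏ j : ZMod n, x j)
      / lam n x y z i := by
  have h := lam_rec x y z i
  have hL : lam n x y z i ≠ 0 := (lam_pos hx hy hz i).ne'
  rw [Rmat2]
  field_simp
  linear_combination -h

lemma Rmat1_prod (hx : ∀ i, 0 < x i) (hy : ∀ i, 0 < y i) (hz : ∀ i, 0 < z i) :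
    ∏ i : ZMod n, Rmat1 n x y z i = ∏ i : ZMod n, y i := by
  unfold Rmat1
  rw [Finset.prod_div_distrib, Finset.prod_mul_distrib]
  have e1 : (∏ i : ZMod n, y (i - 1)) = ∏ i : ZMod n, y i :=
    Equiv.prod_comp (Equiv.subRight (1 : ZMod n)) y
  have e2 : (∏ i : ZMod n, lam n x y z (i - 1)) = ∏ i : ZMod n, lam n x y z i :=
    Equiv.prod_comp (Equiv.subRight (1 : ZMod n)) (lam n x y z)
  rw [e1, e2]
  have hL : (∏ i : ZMod n, lam n x y z i) ≠ 0 :=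
    (Finset.prod_pos fun i _ => lam_pos hx hy hz i).ne'
  field_simp

lemma Rmat2_prod (hx : ∀ i, 0 < x i) (hy : ∀ i, 0 < y i) (hz : ∀ i, 0 < z i) :
    ∏ i : ZMod n, Rmat2 n x y z i = ∏ i : ZMod n, x i := by
  unfold Rmat2
  rw [Finset.prod_div_distrib, Finset.prod_mul_distrib]
  have e1 : (∏ i : ZMod n, x (i + 1)) = ∏ i : ZMod n, x i :=
    Equiv.prod_comp (Equiv.addRight (1 : ZMod n)) x
  have e2 : (∏ i : ZMod n, lam n x y z (i + 1)) = ∏ i : ZMod n, lam n x y z i :=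
    Equiv.prod_comp (Equiv.addRight (1 : ZMod n)) (lam n x y z)
  rw [e1, e2]
  have hL : (∏ i : ZMod n, lam n x y z i) ≠ 0 :=
    (Finset.prod_pos fun i _ => lam_pos hx hy hz i).ne'
  field_simp

lemma Rmat1_id (hx : ∀ i, 0 < x i) (hy : ∀ i, 0 < y i) (hz : ∀ i, 0 < z i)
    (hp : (∏ j : ZMod n, y j) = ∏ j : ZMod n, x j) : Rmat1 n x y z = x := by
  funext i
  rw [Rmat1_add hx hy hz, hp, sub_self, mul_zero, zero_div, add_zero]

lemma Rmat2_id (hx : ∀ i, 0 < x i) (hy : ∀ i, 0 < y i) (hz : ∀ i, 0 < z i)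
    (hp : (∏ j : ZMod n, y j) = ∏ j : ZMod n, x j) : Rmat2 n x y z = y := by
  funext i
  rw [Rmat2_add hx hy hz, hp, sub_self, mul_zero, zero_div, sub_zero]

end PBaux

namespace Braid

open PBaux

lemma algA (dP dQ dS Li Mi Ni : ℝ) (hL : Li ≠ 0) (hM : Mi ≠ 0) (hN : Ni ≠ 0)
    (hd1 : dQ - dP ≠ 0) (hG : (dS - dP) * Ni - (dS - dQ) * Mi ≠ 0) :
    (dQ - dP) / Li + (dS - dQ) / (Li * ((dS - dP) * Ni - (dS - dQ) * Mi) / ((dQ - dP) * Mi))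
      = (dS - dP) / (Li * ((dS - dP) * Ni - (dS - dQ) * Mi) / ((dQ - dP) * Ni)) := by
  field_simp
  ring

lemma algC (dP dQ dS Mi Ni : ℝ) (hM : Mi ≠ 0) (hN : Ni ≠ 0) (hd1 : dQ - dP ≠ 0)
    (hG : (dS - dP) * Ni - (dS - dQ) * Mi ≠ 0) :
    (dS - dP) / Mi = (dS - dQ) / Ni
      + (dQ - dP) / ((dQ - dP) * Mi * Ni / ((dS - dP) * Ni - (dS - dQ) * Mi)) := by
  field_simp
  ring

lemma braid_main {n : ℕ} [NeZero n] (a b c z u : ZMod n → ℝ)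
    (ha : ∀ i, 0 < a i) (hb : ∀ i, 0 < b i) (hc : ∀ i, 0 < c i)
    (hz : ∀ i, 0 < z i) (hu : ∀ i, 0 < u i)
    (hd1 : (∏ j : ZMod n, b j) ≠ ∏ j : ZMod n, a j)
    (hd3 : (∏ j : ZMod n, c j) ≠ ∏ j : ZMod n, b j) :
    T12 n z (T23 n u (T12 n z (a, b, c))) = T23 n u (T12 n z (T23 n u (a, b, c))) := by
  have esub : ∀ j : ZMod n, j + 1 - 1 = j := fun j => add_sub_cancel_right j 1
  simp only [T12, T23]
  set P := ∏ j : ZMod n, a j with hPdef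
  set Q := ∏ j : ZMod n, b j with hQdef
  set S := ∏ j : ZMod n, c j with hSdef
  set L := lam n a b z with hLdef
  set a1 := Rmat1 n a b z with ha1def
  set b1 := Rmat2 n a b z with hb1def
  set M := lam n b1 c u with hMdef
  set b2 := Rmat1 n b1 c u with hb2def
  set c2 := Rmat2 n b1 c u with hc2def
  set nu := lam n a1 b2 z with hnudef
  set N := lam n b c u with hNdef
  set B1' := Rmat1 n b c u with hB1'def
  set C1' := Rmat2 n b c u with hC1'def
  set nup := lam n a B1' z with hnupdef
  set B2'' := Rmat2 n a B1' z with hB2''def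
  set rhop := lam n B2'' C1' u with hrhopdef
  -- positivity
  have pL : ∀ i, 0 < L i := lam_pos ha hb hz
  have pa1 : ∀ i, 0 < a1 i := Rmat1_pos ha hb hz
  have pb1 : ∀ i, 0 < b1 i := Rmat2_pos ha hb hz
  have pM : ∀ i, 0 < M i := lam_pos pb1 hc hu
  have pb2 : ∀ i, 0 < b2 i := Rmat1_pos pb1 hc hu
  have pnu : ∀ i, 0 < nu i := lam_pos pa1 pb2 hz
  have pN : ∀ i, 0 < N i := lam_pos hb hc hu
  have pB1' : ∀ i, 0 < B1' i := Rmat1_pos hb hc hu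
  have pC1' : ∀ i, 0 < C1' i := Rmat2_pos hb hc hu
  have pnup : ∀ i, 0 < nup i := lam_pos ha pB1' hz
  have pB2'' : ∀ i, 0 < B2'' i := Rmat2_pos ha pB1' hz
  have prhop : ∀ i, 0 < rhop i := lam_pos pB2'' pC1' hu
  -- products
  have prodA1 : (∏ j : ZMod n, a1 j) = Q := Rmat1_prod ha hb hz
  have prodB1 : (∏ j : ZMod n, b1 j) = P := Rmat2_prod ha hb hz
  have prodB2 : (∏ j : ZMod n, b2 j) = S := Rmat1_prod pb1 hc hu
  have prodB1' : (∏ j : ZMod n, B1' j) = S := Rmat1_prod hb hc hu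
  have prodC1' : (∏ j : ZMod n, C1' j) = Q := Rmat2_prod hb hc hu
  have prodB2'' : (∏ j : ZMod n, B2'' j) = P := Rmat2_prod ha pB1' hz
  -- nonzero differences
  have hd1' : Q - P ≠ 0 := sub_ne_zero.2 hd1
  have hd3' : S - Q ≠ 0 := sub_ne_zero.2 hd3
  -- recurrences
  have r1 : ∀ i, b i * L i - a (i + 1) * L (i + 1) = z i * (Q - P) :=
    fun i => lam_rec a b z i
  have r2 : ∀ i, c i * N i - b (i + 1) * N (i + 1) = u i * (S - Q) :=
    fun i => lam_rec b c u i
  have r3 : ∀ i, c i * M i - b1 (i + 1) * M (i + 1) = u i * (S - P) := by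
    intro i
    have h := lam_rec b1 c u i
    rwa [prodB1] at h
  have r4 : ∀ i, b2 i * nu i - a1 (i + 1) * nu (i + 1) = z i * (S - Q) := by
    intro i
    have h := lam_rec a1 b2 z i
    rwa [prodB2, prodA1] at h
  have r5 : ∀ i, B1' i * nup i - a (i + 1) * nup (i + 1) = z i * (S - P) := by
    intro i
    have h := lam_rec a B1' z i
    rwa [prodB1'] at h
  have r6 : ∀ i, C1' i * rhop i - B2'' (i + 1) * rhop (i + 1) = u i * (Q - P) := by
    intro i
    have h := lam_rec B2'' C1' u i
    rwa [prodC1', prodB2''] at h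
  have r2' : ∀ i, c (i - 1) * N (i - 1) - b i * N i = u (i - 1) * (S - Q) := by
    intro i
    have h := r2 (i - 1)
    rwa [sub_add_cancel] at h
  have r3' : ∀ i, c (i - 1) * M (i - 1) - b1 i * M i = u (i - 1) * (S - P) := by
    intro i
    have h := r3 (i - 1)
    rwa [sub_add_cancel] at h
  -- multiplicative facts
  have hb1L : ∀ i, b1 i * L i = b i * L i - z i * (Q - P) := by
    intro i
    have hmul : b1 i * L i = a (i + 1) * L (i + 1) := by
      show a (i + 1) * lam n a b z (i + 1) / lam n a b z i * lam n a b z i = _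
      rw [div_mul_cancel₀ _ (pL i).ne']
    linear_combination hmul - r1 i
  have hb2eq : ∀ i, b2 i = c (i - 1) * M (i - 1) / M i := fun i => rfl
  have ha1eq : ∀ i, a1 (i + 1) = b i * L i / L (i + 1) := by
    intro i
    show b (i + 1 - 1) * lam n a b z (i + 1 - 1) / lam n a b z (i + 1) = _
    rw [esub]
  have hB1'eq : ∀ i, B1' i = c (i - 1) * N (i - 1) / N i := fun i => rfl
  have hC1'eq : ∀ i, C1' i = b (i + 1) * N (i + 1) / N i := fun i => rfl
  -- ν = ν̂ : the candidate recurrence check (E)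
  have hnuh_rec : ∀ i,
      b2 i * (L i * ((S - P) * N (i - 1) - (S - Q) * M (i - 1)) / ((Q - P) * M (i - 1)))
      - a1 (i + 1) * (L (i + 1) * ((S - P) * N i - (S - Q) * M i) / ((Q - P) * M i))
      = z i * (S - Q) := by
    intro i
    have hMi := (pM i).ne'
    have hMi1 := (pM (i - 1)).ne'
    have hLi1 := (pL (i + 1)).ne'
    have hstep : b2 i * (L i * ((S - P) * N (i - 1) - (S - Q) * M (i - 1)) / ((Q - P) * M (i - 1)))
        - a1 (i + 1) * (L (i + 1) * ((S - P) * N i - (S - Q) * M i) / ((Q - P) * M i))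
        = (c (i - 1) * L i * ((S - P) * N (i - 1) - (S - Q) * M (i - 1))
          - b i * L i * ((S - P) * N i - (S - Q) * M i)) / ((Q - P) * M i) := by
      rw [hb2eq i, ha1eq i]
      field_simp
    rw [hstep, div_eq_iff (mul_ne_zero hd1' hMi)]
    linear_combination ((S - P) * L i) * r2' i - ((S - Q) * L i) * r3' i
      - ((S - Q) * M i) * hb1L i
  have hnu_eq : ∀ i, nu i
      = L i * ((S - P) * N (i - 1) - (S - Q) * M (i - 1)) / ((Q - P) * M (i - 1)) := by
    have hz0 := cyclic_zero (x := a1) (y := b2)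
      (f := fun i => nu i
        - L i * ((S - P) * N (i - 1) - (S - Q) * M (i - 1)) / ((Q - P) * M (i - 1)))
      ?_ ?_
    · intro i
      have h := hz0 i
      linarith
    · intro i
      simp only [esub]
      linear_combination r4 i - hnuh_rec i
    · intro h
      rw [prodA1, prodB2] at h
      exact hd3 h.symm
  have hGne : ∀ i, (S - P) * N i - (S - Q) * M i ≠ 0 := by
    intro i h
    have hp := pnu (i + 1)
    rw [hnu_eq (i + 1)] at hp
    simp only [esub] at hp
    rw [h, mul_zero, zero_div] at hp
    exact lt_irrefl _ hp
  -- main reduction: the A and C identities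
  suffices hAC : (∀ i, (Q - P) / L i + (S - Q) / nu i = (S - P) / nup i) ∧
      (∀ i, (S - P) / M i = (S - Q) / N i + (Q - P) / rhop i) by
    obtain ⟨Aeq, Ceq⟩ := hAC
    have ha1add : ∀ i, a1 i = a i + z (i - 1) * (Q - P) / L i :=
      fun i => Rmat1_add ha hb hz i
    have hb1add : ∀ i, b1 i = b i - z i * (Q - P) / L i :=
      fun i => Rmat2_add ha hb hz i
    have hb2add : ∀ i, b2 i = b1 i + u (i - 1) * (S - P) / M i := by
      intro i
      have h := Rmat1_add pb1 hc hu i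
      rwa [prodB1] at h
    have hc2add : ∀ i, c2 i = c i - u i * (S - P) / M i := by
      intro i
      have h := Rmat2_add pb1 hc hu i
      rwa [prodB1] at h
    have hB1'add : ∀ i, B1' i = b i + u (i - 1) * (S - Q) / N i :=
      fun i => Rmat1_add hb hc hu i
    have hC1'add : ∀ i, C1' i = c i - u i * (S - Q) / N i :=
      fun i => Rmat2_add hb hc hu i
    have hB2''add : ∀ i, B2'' i = B1' i - z i * (S - P) / nup i := by
      intro i
      have h := Rmat2_add ha pB1' hz i
      rwa [prodB1'] at h
    have comp1 : Rmat1 n a1 b2 z = Rmat1 n a B1' z := by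
      funext i
      have h1 := Rmat1_add pa1 pb2 hz i
      rw [prodB2, prodA1, ← hnudef] at h1
      have h2 := Rmat1_add ha pB1' hz i
      rw [prodB1', ← hnupdef] at h2
      rw [h1, h2, ha1add i]
      linear_combination (z (i - 1)) * Aeq i
    have comp2 : Rmat2 n a1 b2 z = Rmat1 n B2'' C1' u := by
      funext i
      have h1 := Rmat2_add pa1 pb2 hz i
      rw [prodB2, prodA1, ← hnudef] at h1
      have h2 := Rmat1_add pB2'' pC1' hu i
      rw [prodC1', prodB2'', ← hrhopdef] at h2
      rw [h1, h2, hb2add i, hb1add i, hB2''add i, hB1'add i]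
      linear_combination (-(z i)) * Aeq i + (u (i - 1)) * Ceq i
    have comp3 : c2 = Rmat2 n B2'' C1' u := by
      funext i
      have h1 := Rmat2_add pB2'' pC1' hu i
      rw [prodC1', prodB2'', ← hrhopdef] at h1
      rw [hc2add i, h1, hC1'add i]
      linear_combination (-(u i)) * Ceq i
    rw [comp1, comp2, comp3]
  by_cases hd2 : S = P
  · constructor
    · intro i
      have hnuL : nu i = L i := by
        rw [hnu_eq i, hd2]
        have hM1 := (pM (i - 1)).ne'
        field_simp
        ring
      rw [hnuL, hd2, ← add_div,
        show Q - P + (P - Q) = (0 : ℝ) from by ring,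
        show (P : ℝ) - P = 0 from sub_self P, zero_div, zero_div]
    · have hB2''id : ∀ i, B2'' i = B1' i := by
        intro i
        have h := Rmat2_add ha pB1' hz i
        rw [prodB1'] at h
        rw [hB2''def, h, hd2, sub_self, mul_zero, zero_div, sub_zero]
      have hrhoN_rec : ∀ i, C1' i * N i - B2'' (i + 1) * N (i + 1) = u i * (Q - P) := by
        intro i
        rw [hB2''id (i + 1)]
        have hC1'a : C1' i = c i - u i * (S - Q) / N i := Rmat2_add hb hc hu i
        have hB1'a : B1' (i + 1) = b (i + 1) + u i * (S - Q) / N (i + 1) := by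
          have h := Rmat1_add hb hc hu (i + 1)
          rwa [esub] at h
        rw [hC1'a, hB1'a]
        have hNi := (pN i).ne'
        have hNi1 := (pN (i + 1)).ne'
        have e1 : (c i - u i * (S - Q) / N i) * N i = c i * N i - u i * (S - Q) := by
          field_simp
        have e2 : (b (i + 1) + u i * (S - Q) / N (i + 1)) * N (i + 1)
            = b (i + 1) * N (i + 1) + u i * (S - Q) := by
          field_simp
        rw [e1, e2]
        linear_combination r2 i - (u i) * hd2
      have hrho_eq : ∀ i, rhop i = N i := by
        have hz0 := cyclic_zero (x := B2'') (y := C1') (f := fun i => rhop i - N i) ?_ ?_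
        · intro i
          have h := hz0 i
          linarith
        · intro i
          linear_combination r6 i - hrhoN_rec i
        · intro h
          rw [prodB2'', prodC1'] at h
          exact hd1 h.symm
      intro i
      rw [hrho_eq i, hd2, ← add_div,
        show P - Q + (Q - P) = (0 : ℝ) from by ring,
        show (P : ℝ) - P = 0 from sub_self P, zero_div, zero_div]
  · have hd2' : S - P ≠ 0 := sub_ne_zero.2 hd2
    have hnup_rec : ∀ i,
        B1' i * (L i * ((S - P) * N (i - 1) - (S - Q) * M (i - 1)) / ((Q - P) * N (i - 1)))
        - a (i + 1) * (L (i + 1) * ((S - P) * N i - (S - Q) * M i) / ((Q - P) * N i))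
        = z i * (S - P) := by
      intro i
      have hNi := (pN i).ne'
      have hNi1 := (pN (i - 1)).ne'
      have hstep :
          B1' i * (L i * ((S - P) * N (i - 1) - (S - Q) * M (i - 1)) / ((Q - P) * N (i - 1)))
          - a (i + 1) * (L (i + 1) * ((S - P) * N i - (S - Q) * M i) / ((Q - P) * N i))
          = (c (i - 1) * L i * ((S - P) * N (i - 1) - (S - Q) * M (i - 1))
            - a (i + 1) * L (i + 1) * ((S - P) * N i - (S - Q) * M i)) / ((Q - P) * N i) := by
        rw [hB1'eq i]
        field_simp
      rw [hstep, div_eq_iff (mul_ne_zero hd1' hNi)]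
      linear_combination ((S - P) * N i - (S - Q) * M i) * r1 i + ((S - P) * L i) * r2' i
        - ((S - Q) * L i) * r3' i - ((S - Q) * M i) * hb1L i
    have hnup_eq : ∀ i, nup i
        = L i * ((S - P) * N (i - 1) - (S - Q) * M (i - 1)) / ((Q - P) * N (i - 1)) := by
      have hz0 := cyclic_zero (x := a) (y := B1')
        (f := fun i => nup i
          - L i * ((S - P) * N (i - 1) - (S - Q) * M (i - 1)) / ((Q - P) * N (i - 1)))
        ?_ ?_
      · intro i
        have h := hz0 i
        linarith
      · intro i
        simp only [esub]
        linear_combination r5 i - hnup_rec i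
      · intro h
        rw [prodB1'] at h
        exact hd2 h.symm
    have hrho_rec : ∀ i,
        C1' i * ((Q - P) * M i * N i / ((S - P) * N i - (S - Q) * M i))
        - B2'' (i + 1) * ((Q - P) * M (i + 1) * N (i + 1)
            / ((S - P) * N (i + 1) - (S - Q) * M (i + 1)))
        = u i * (Q - P) := by
      intro i
      have hB2''a : B2'' (i + 1) = B1' (i + 1) - z (i + 1) * (S - P) / nup (i + 1) := by
        have h := Rmat2_add ha pB1' hz (i + 1)
        rwa [prodB1'] at h
      have hB1'a : B1' (i + 1) = c i * N i / N (i + 1) := by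
        have h := hB1'eq (i + 1)
        rwa [esub] at h
      have hnupa : nup (i + 1)
          = L (i + 1) * ((S - P) * N i - (S - Q) * M i) / ((Q - P) * N i) := by
        have h := hnup_eq (i + 1)
        rwa [esub] at h
      rw [hB2''a, hnupa, hB1'a, hC1'eq i]
      have hNi := (pN i).ne'
      have hNi1 := (pN (i + 1)).ne'
      have hLi1 := (pL (i + 1)).ne'
      have hGi := hGne i
      have hGi1 := hGne (i + 1)
      have hstep :
          b (i + 1) * N (i + 1) / N i * ((Q - P) * M i * N i / ((S - P) * N i - (S - Q) * M i))
          - (c i * N i / N (i + 1)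
              - z (i + 1) * (S - P)
                / (L (i + 1) * ((S - P) * N i - (S - Q) * M i) / ((Q - P) * N i)))
            * ((Q - P) * M (i + 1) * N (i + 1)
              / ((S - P) * N (i + 1) - (S - Q) * M (i + 1)))
          = (Q - P) * (b (i + 1) * N (i + 1) * M i * L (i + 1)
                * ((S - P) * N (i + 1) - (S - Q) * M (i + 1))
              - c i * N i * M (i + 1) * L (i + 1) * ((S - P) * N i - (S - Q) * M i)
              + z (i + 1) * (S - P) * (Q - P) * N i * M (i + 1) * N (i + 1))
            / (L (i + 1) * ((S - P) * N i - (S - Q) * M i)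
              * ((S - P) * N (i + 1) - (S - Q) * M (i + 1))) := by
        generalize (S - P) * N i - (S - Q) * M i = G0 at hGi ⊢
        generalize (S - P) * N (i + 1) - (S - Q) * M (i + 1) = G1 at hGi1 ⊢
        field_simp
        ring
      rw [hstep, div_eq_iff (mul_ne_zero (mul_ne_zero hLi1 hGi) hGi1)]
      linear_combination
        (-(Q - P) * (L (i + 1) * (S - P) * M i * N (i + 1)
          + L (i + 1) * M (i + 1) * ((S - P) * N i - (S - Q) * M i))) * r2 i
        + ((Q - P) * (S - P) * N i * N (i + 1) * L (i + 1)) * r3 i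
        + ((Q - P) * (S - P) * N i * N (i + 1) * M (i + 1)) * hb1L (i + 1)
    have hrho_eq : ∀ i, rhop i
        = (Q - P) * M i * N i / ((S - P) * N i - (S - Q) * M i) := by
      have hz0 := cyclic_zero (x := B2'') (y := C1')
        (f := fun i => rhop i - (Q - P) * M i * N i / ((S - P) * N i - (S - Q) * M i))
        ?_ ?_
      · intro i
        have h := hz0 i
        linarith
      · intro i
        linear_combination r6 i - hrho_rec i
      · intro h
        rw [prodB2'', prodC1'] at h
        exact hd1 h.symm
    constructor
    · intro i
      rw [hnu_eq i, hnup_eq i]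
      exact algA P Q S (L i) (M (i - 1)) (N (i - 1)) (pL i).ne' (pM (i - 1)).ne'
        (pN (i - 1)).ne' hd1' (hGne (i - 1))
    · intro i
      rw [hrho_eq i]
      exact algC P Q S (M i) (N i) (pM i).ne' (pN i).ne' hd1' (hGne i)

end Braid

/-- the edge-weighted plabic R-matrix satisfies the braid relation
`T^{(1,2)} ∘ T^{(2,3)} ∘ T^{(1,2)} = T^{(2,3)} ∘ T^{(1,2)} ∘ T^{(2,3)}` on the string
weights `(a,b,c)` of a fully generic cylindric 3-loop expanded directed plabic network. -/
theorem plabic_R_braid (n : ℕ) [NeZero n] (a b c z u : ZMod n → ℝ)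
    (ha : ∀ i, 0 < a i) (hb : ∀ i, 0 < b i) (hc : ∀ i, 0 < c i)
    (hz : ∀ i, 0 < z i) (hu : ∀ i, 0 < u i) :
    T12 n z (T23 n u (T12 n z (a, b, c))) = T23 n u (T12 n z (T23 n u (a, b, c))) := by
  by_cases hd1 : (∏ j : ZMod n, b j) = ∏ j : ZMod n, a j
  · have e1 : Rmat1 n a b z = a := PBaux.Rmat1_id ha hb hz hd1
    have e2 : Rmat2 n a b z = b := PBaux.Rmat2_id ha hb hz hd1
    have h1 : T12 n z (a, b, c) = (a, b, c) := by
      simp only [T12]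
      rw [e1, e2]
    rw [h1]
    have pB := PBaux.Rmat1_pos hb hc hu
    have pC := PBaux.Rmat2_pos hb hc hu
    have h2 : T23 n u (a, b, c) = (a, Rmat1 n b c u, Rmat2 n b c u) := rfl
    rw [h2]
    have h3 : T12 n z (a, Rmat1 n b c u, Rmat2 n b c u)
        = (Rmat1 n a (Rmat1 n b c u) z, Rmat2 n a (Rmat1 n b c u) z, Rmat2 n b c u) := rfl
    rw [h3]
    have pB2 := PBaux.Rmat2_pos ha pB hz
    have hprod : (∏ j : ZMod n, Rmat2 n b c u j)
        = ∏ j : ZMod n, Rmat2 n a (Rmat1 n b c u) z j := by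
      rw [PBaux.Rmat2_prod hb hc hu, PBaux.Rmat2_prod ha pB hz, hd1]
    have e3 : Rmat1 n (Rmat2 n a (Rmat1 n b c u) z) (Rmat2 n b c u) u
        = Rmat2 n a (Rmat1 n b c u) z := PBaux.Rmat1_id pB2 pC hu hprod
    have e4 : Rmat2 n (Rmat2 n a (Rmat1 n b c u) z) (Rmat2 n b c u) u
        = Rmat2 n b c u := PBaux.Rmat2_id pB2 pC hu hprod
    simp only [T23]
    rw [e3, e4]
  · by_cases hd3 : (∏ j : ZMod n, c j) = ∏ j : ZMod n, b j
    · have e1 : Rmat1 n b c u = b := PBaux.Rmat1_id hb hc hu hd3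
      have e2 : Rmat2 n b c u = c := PBaux.Rmat2_id hb hc hu hd3
      have h1 : T23 n u (a, b, c) = (a, b, c) := by
        simp only [T23]
        rw [e1, e2]
      rw [h1]
      have pa1 := PBaux.Rmat1_pos ha hb hz
      have pb1 := PBaux.Rmat2_pos ha hb hz
      have h2 : T12 n z (a, b, c) = (Rmat1 n a b z, Rmat2 n a b z, c) := rfl
      rw [h2]
      have h3 : T23 n u (Rmat1 n a b z, Rmat2 n a b z, c)
          = (Rmat1 n a b z, Rmat1 n (Rmat2 n a b z) c u, Rmat2 n (Rmat2 n a b z) c u) := rfl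
      rw [h3]
      have pb2 := PBaux.Rmat1_pos pb1 hc hu
      have hprod : (∏ j : ZMod n, Rmat1 n (Rmat2 n a b z) c u j)
          = ∏ j : ZMod n, Rmat1 n a b z j := by
        rw [PBaux.Rmat1_prod pb1 hc hu, PBaux.Rmat1_prod ha hb hz, hd3]
      have e3 : Rmat1 n (Rmat1 n a b z) (Rmat1 n (Rmat2 n a b z) c u) z
          = Rmat1 n a b z := PBaux.Rmat1_id pa1 pb2 hz hprod
      have e4 : Rmat2 n (Rmat1 n a b z) (Rmat1 n (Rmat2 n a b z) c u) z
          = Rmat1 n (Rmat2 n a b z) c u := PBaux.Rmat2_id pa1 pb2 hz hprod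
      simp only [T12]
      rw [e3, e4]
    · exact Braid.braid_main a b c z u ha hb hc hz hu hd1 hd3
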